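/- arXiv:1912.12846 — 2 statements merged into one kernel-verified Lean document; each statement's English description precedes it below -/
import Mathlib

section
/- (Closed form underlying Theorem 1.) Let u, s, t be three distinct vertices with dist(s,u) ≤ dist(t,u), and set D = dist(t,u). For d ∈ ℕ let N_{≥d} = |{v ∈ V\{s,t} : dist(v,u) ≥ d}| and N_{>d} = |{v ∈ V\{s,t} : dist(v,u) > d}|. Then the semivalue interaction index of s and t in the single-node closeness game ν_u equals I^{SEMI}_{s,t}(ν_u) = Σ_{k=0}^{n−2} (β(k)/binom(n−2,k)) · [ Σ_{d=D+1}^{Δ} f(d)·(binom(N_{≥d},k) − binom(N_{>d},k)) − f(D)·binom(N_{>D},k) ], where Δ = max_{v∈V} dist(v,u). -/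
open Finset

/-- The single-node closeness game `ν_u`: a coalition `C` is worth `f(dist(C,u))`
(where `dist(C,u) = min_{c ∈ C} dist(c,u)`) if `C` is nonempty, and `0` otherwise. -/
noncomputable def nuSingle {V : Type*} (G : SimpleGraph V) (f : ℕ → ℝ) (u : V)
    (C : Finset V) : ℝ :=
  if h : C.Nonempty then f (C.inf' h fun c => G.dist c u) else 0

/-- The synergy of `s` and `t` in the context of a coalition `C ⊆ V \ {s,t}`:
`S_ν(C,s,t) = ν(C∪{s,t}) − ν(C∪{s}) − ν(C∪{t}) + ν(C)`. -/
noncomputable def synergy {V : Type*} [DecidableEq V] (ν : Finset V → ℝ)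
    (C : Finset V) (s t : V) : ℝ :=
  ν (insert s (insert t C)) - ν (insert s C) - ν (insert t C) + ν C

/-- The semivalue interaction index of `s` and `t` in the game `ν`, with weights `β`:
`I^{SEMI}_{s,t}(ν) = Σ_{k=0}^{n−2} Σ_{C ⊆ V\{s,t}, |C| = k} β(k)·S_ν(C,s,t)/binom(n−2,k)`. -/
noncomputable def ISemi {V : Type*} [Fintype V] [DecidableEq V]
    (β : ℕ → ℝ) (ν : Finset V → ℝ) (s t : V) : ℝ :=
  ∑ k ∈ Finset.range (Fintype.card V - 1),
    ∑ C ∈ (univ \ {s, t} : Finset V).powersetCard k,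
      β k * synergy ν C s t / ((Fintype.card V - 2).choose k : ℝ)

/-- Closed form underlying Theorem 1: for distinct `u, s, t` with
`dist(s,u) ≤ dist(t,u)` and `D = dist(t,u)`, letting
`N_{≥d} = |{v ∈ V\{s,t} : dist(v,u) ≥ d}|`, `N_{>d} = |{v ∈ V\{s,t} : dist(v,u) > d}|`
and `Δ = max_{v ∈ V} dist(v,u)`, the semivalue interaction index of `s` and `t` in
the single-node closeness game `ν_u` equals
`Σ_{k=0}^{n−2} (β(k)/binom(n−2,k)) · [Σ_{d=D+1}^{Δ} f(d)·(binom(N_{≥d},k) − binom(N_{>d},k))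
  − f(D)·binom(N_{>D},k)]`. -/
theorem ISemi_nuSingle_closed_form
    {V : Type*} [Fintype V] [DecidableEq V] (G : SimpleGraph V)
    (hG : G.Connected) (hn : 3 ≤ Fintype.card V) (f : ℕ → ℝ) (β : ℕ → ℝ)
    (u s t : V) (hus : u ≠ s) (hut : u ≠ t) (hst : s ≠ t)
    (hd : G.dist s u ≤ G.dist t u)
    (D : ℕ) (hD : D = G.dist t u)
    (Nge Ngt : ℕ → ℕ)
    (hNge : ∀ d, Nge d = ((univ \ {s, t} : Finset V).filter fun v => d ≤ G.dist v u).card)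
    (hNgt : ∀ d, Ngt d = ((univ \ {s, t} : Finset V).filter fun v => d < G.dist v u).card)
    (Δ : ℕ) (hΔ : Δ = univ.sup fun v => G.dist v u) :
    ISemi β (nuSingle G f u) s t
      = ∑ k ∈ Finset.range (Fintype.card V - 1),
          β k / ((Fintype.card V - 2).choose k : ℝ) *
            ((∑ d ∈ Finset.Icc (D + 1) Δ,
                f d * (((Nge d).choose k : ℝ) - ((Ngt d).choose k : ℝ)))
              - f D * ((Ngt D).choose k : ℝ)) := by
  subst hD hΔ
  unfold ISemi
  refine Finset.sum_congr rfl fun k _ => ?_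
  set D := G.dist t u with hD
  set Δ := univ.sup fun v => G.dist v u with hΔ
  set A : Finset V := univ \ {s, t} with hA
  -- counting lemmas
  have count1 : ∀ d : ℕ,
      (∑ C ∈ A.powersetCard k, (if ∀ v ∈ C, d ≤ G.dist v u then (1:ℝ) else 0))
        = ((Nge d).choose k : ℝ) := by
    intro d
    have hset : (A.powersetCard k).filter (fun C => ∀ v ∈ C, d ≤ G.dist v u)
        = (A.filter (fun v => d ≤ G.dist v u)).powersetCard k := by
      ext C
      simp only [Finset.mem_filter, Finset.mem_powersetCard]
      constructor
      · rintro ⟨⟨h1, h2⟩, h3⟩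
        exact ⟨fun x hx => Finset.mem_filter.mpr ⟨h1 hx, h3 x hx⟩, h2⟩
      · rintro ⟨h1, h2⟩
        exact ⟨⟨fun x hx => (Finset.mem_filter.mp (h1 hx)).1, h2⟩,
          fun x hx => (Finset.mem_filter.mp (h1 hx)).2⟩
    rw [Finset.sum_boole, hset, Finset.card_powersetCard, hNge d]
  have count2 : ∀ d : ℕ,
      (∑ C ∈ A.powersetCard k, (if ∀ v ∈ C, d < G.dist v u then (1:ℝ) else 0))
        = ((Ngt d).choose k : ℝ) := by
    intro d
    have hset : (A.powersetCard k).filter (fun C => ∀ v ∈ C, d < G.dist v u)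
        = (A.filter (fun v => d < G.dist v u)).powersetCard k := by
      ext C
      simp only [Finset.mem_filter, Finset.mem_powersetCard]
      constructor
      · rintro ⟨⟨h1, h2⟩, h3⟩
        exact ⟨fun x hx => Finset.mem_filter.mpr ⟨h1 hx, h3 x hx⟩, h2⟩
      · rintro ⟨h1, h2⟩
        exact ⟨⟨fun x hx => (Finset.mem_filter.mp (h1 hx)).1, h2⟩,
          fun x hx => (Finset.mem_filter.mp (h1 hx)).2⟩
    rw [Finset.sum_boole, hset, Finset.card_powersetCard, hNgt d]
  -- per-coalition identity
  have key : ∀ C ∈ A.powersetCard k,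
      synergy (nuSingle G f u) C s t
        = (∑ d ∈ Finset.Icc (D + 1) Δ,
            f d * ((if ∀ v ∈ C, d ≤ G.dist v u then (1:ℝ) else 0)
                   - (if ∀ v ∈ C, d < G.dist v u then (1:ℝ) else 0)))
          - f D * (if ∀ v ∈ C, D < G.dist v u then (1:ℝ) else 0) := by
    intro C _
    rcases C.eq_empty_or_nonempty with rfl | hCne
    · simp [synergy, nuSingle, Finset.inf'_insert, min_eq_left hd]
      rw [min_eq_left (show G.dist s u ≤ G.dist t u from hd)]; simp [hD]
    · set m := C.inf' hCne (fun v => G.dist v u) with hm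
      have h4 : nuSingle G f u C = f m := by
        rw [nuSingle, dif_pos hCne]
      have h3 : nuSingle G f u (insert t C) = f (D ⊓ m) := by
        rw [nuSingle, dif_pos (Finset.insert_nonempty t C)]
        congr 1
        rw [Finset.inf'_insert hCne]
      have h2 : nuSingle G f u (insert s C) = f (G.dist s u ⊓ m) := by
        rw [nuSingle, dif_pos (Finset.insert_nonempty s C)]
        congr 1
        rw [Finset.inf'_insert hCne]
      have h1 : nuSingle G f u (insert s (insert t C)) = f (G.dist s u ⊓ m) := by
        rw [nuSingle, dif_pos (Finset.insert_nonempty s (insert t C))]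
        congr 1
        rw [Finset.inf'_insert (Finset.insert_nonempty t C), Finset.inf'_insert hCne,
          ← min_assoc, min_eq_left hd]
      have hsyn : synergy (nuSingle G f u) C s t = f m - f (D ⊓ m) := by
        rw [synergy, h1, h2, h3, h4]; ring
      have hle : ∀ d : ℕ, (∀ v ∈ C, d ≤ G.dist v u) ↔ d ≤ m :=
        fun d => (Finset.le_inf'_iff hCne _).symm
      have hlt : ∀ d : ℕ, (∀ v ∈ C, d < G.dist v u) ↔ d < m :=
        fun d => (Finset.lt_inf'_iff hCne).symm
      rcases le_or_gt m D with hmD | hmD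
      · have hmin : D ⊓ m = m := min_eq_right hmD
        rw [hsyn, hmin, sub_self]
        rw [if_neg (by rw [hlt]; omega)]
        rw [Finset.sum_eq_zero, mul_zero, sub_zero]
        intro d hdmem
        rw [Finset.mem_Icc] at hdmem
        rw [if_neg (by rw [hle]; omega), if_neg (by rw [hlt]; omega)]
        ring
      · have hmin : D ⊓ m = D := min_eq_left hmD.le
        rw [hsyn, hmin, if_pos ((hlt D).mpr hmD), mul_one]
        congr 1
        have hstep : ∀ d ∈ Finset.Icc (D + 1) Δ,
            f d * ((if ∀ v ∈ C, d ≤ G.dist v u then (1:ℝ) else 0)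
                   - (if ∀ v ∈ C, d < G.dist v u then (1:ℝ) else 0))
              = if d = m then f m else 0 := by
          intro d _
          rcases lt_trichotomy d m with h | rfl | h
          · rw [if_pos ((hle d).mpr h.le), if_pos ((hlt d).mpr h), if_neg h.ne]
            ring
          · rw [if_pos ((hle m).mpr le_rfl), if_neg (by rw [hlt m]; omega), if_pos rfl]
            ring
          · rw [if_neg (by rw [hle]; omega), if_neg (by rw [hlt]; omega), if_neg h.ne']
            ring
        rw [Finset.sum_congr rfl hstep, Finset.sum_ite_eq', if_pos]
        rw [Finset.mem_Icc]
        obtain ⟨v, hv⟩ := hCne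
        have h1 : m ≤ G.dist v u := Finset.inf'_le _ hv
        have h2 : G.dist v u ≤ Δ := by
          rw [hΔ]
          exact Finset.le_sup (f := fun v => G.dist v u) (Finset.mem_univ v)
        omega
  -- put it together
  have main : ∑ C ∈ A.powersetCard k, synergy (nuSingle G f u) C s t
      = (∑ d ∈ Finset.Icc (D + 1) Δ,
          f d * (((Nge d).choose k : ℝ) - ((Ngt d).choose k : ℝ)))
        - f D * ((Ngt D).choose k : ℝ) := by
    rw [Finset.sum_congr rfl key, Finset.sum_sub_distrib, Finset.sum_comm]
    congr 1
    · refine Finset.sum_congr rfl fun d _ => ?_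
      rw [← Finset.mul_sum, Finset.sum_sub_distrib, count1 d, count2 d]
    · rw [← Finset.mul_sum, count2 D]
  calc ∑ C ∈ A.powersetCard k,
        β k * synergy (nuSingle G f u) C s t / ((Fintype.card V - 2).choose k : ℝ)
      = β k / ((Fintype.card V - 2).choose k : ℝ)
          * ∑ C ∈ A.powersetCard k, synergy (nuSingle G f u) C s t := by
        rw [Finset.mul_sum]
        exact Finset.sum_congr rfl fun C _ => by ring
    _ = _ := by rw [main]
end

section
/- (Closed form underlying Theorem 2.) Let u, s, t be three distinct vertices with dist(s,u) ≤ dist(t,u), and set D = dist(t,u). For d ∈ ℕ let M_{≤d} = |{v ∈ V\{s,t} : dist(v,u) ≤ d}| + 1 and M_{<d} = |{v ∈ V\{s,t} : dist(v,u) < d}| + 1. Then the Shapley interaction index of s and t in the single-node closeness game ν_u equals I^{Shapley}_{s,t}(ν_u) = −f(D)/M_{≤D} + Σ_{d=D+1}^{Δ} f(d)·(1/M_{<d} − 1/M_{≤d}), where Δ = max_{v∈V} dist(v,u). -/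
open Finset

/-- The Shapley interaction index of `s ≠ t` in `ν`:
`I^{Shapley}_{s,t}(ν) = (1/(n−1)!) · Σ_π S_ν(C_π, s, t)`, where `π` ranges over the
`(n−1)!` linear orderings of the `(n−1)`-element set obtained from `V` by merging `s`
and `t` into a single element (modelled as the subtype `{v // v ≠ t}`, with `s`
playing the role of the merged element), and `C_π ⊆ V\{s,t}` is the set of elements
preceding the merged element in `π`. -/
noncomputable def IShapley {V : Type*} [Fintype V] [DecidableEq V]
    (ν : Finset V → ℝ) (s t : V) (hst : s ≠ t) : ℝ :=
  (∑ π : Fin (Fintype.card V - 1) ≃ {v : V // v ≠ t},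
      synergy ν
        ((univ.filter fun v : {v : V // v ≠ t} => π.symm v < π.symm ⟨s, hst⟩).image
          Subtype.val) s t)
    / ((Fintype.card V - 1).factorial : ℝ)

/-- Among all `m!` orderings of `W` (with `|W| = m`), the number of those in which a
distinguished element `x` comes before every element of a set `A ∌ x` is exactly
`m! / (|A| + 1)`. -/
lemma count_first {W : Type*} [Fintype W] [DecidableEq W] {m : ℕ}
    (hm : Fintype.card W = m) (x : W) (A : Finset W) (hx : x ∉ A) :
    (A.card + 1) * (univ.filter fun π : Fin m ≃ W => ∀ a ∈ A, π.symm x < π.symm a).card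
      = m.factorial := by
  classical
  set S : Finset W := insert x A with hS
  have hxS : x ∈ S := mem_insert_self x A
  set E : W → Finset (Fin m ≃ W) :=
    fun w => univ.filter fun π => ∀ v ∈ S, π.symm w ≤ π.symm v with hE
  have hfac : Fintype.card (Fin m ≃ W) = m.factorial := by
    rw [Fintype.card_equiv (Fintype.equivOfCardEq (by simpa using hm.symm))]
    simp
  have hcover : (univ : Finset (Fin m ≃ W)) = S.biUnion E := by
    apply le_antisymm
    · intro π _
      have hSne : S.Nonempty := ⟨x, hxS⟩
      obtain ⟨w, hwS, hwmin⟩ := S.exists_min_image (fun v => π.symm v) hSne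
      exact mem_biUnion.2 ⟨w, hwS, mem_filter.2 ⟨mem_univ _, hwmin⟩⟩
    · intro π _; exact mem_univ _
  have hdisj : ∀ w₁ ∈ S, ∀ w₂ ∈ S, w₁ ≠ w₂ → Disjoint (E w₁) (E w₂) := by
    intro w₁ h₁ w₂ h₂ hne
    refine disjoint_left.2 fun π hπ₁ hπ₂ => ?_
    simp only [hE, mem_filter] at hπ₁ hπ₂
    have h12 := hπ₁.2 w₂ h₂
    have h21 := hπ₂.2 w₁ h₁
    exact hne (π.symm.injective (le_antisymm h12 h21))
  have hsame : ∀ w ∈ S, (E w).card = (E x).card := by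
    intro w hw
    apply Finset.card_nbij' (fun π => π.trans (Equiv.swap x w)) (fun π => π.trans (Equiv.swap x w))
    · intro π hπ
      simp only [hE, Finset.mem_coe, mem_filter] at hπ ⊢
      refine ⟨mem_univ _, fun v hv => ?_⟩
      have hv' : Equiv.swap x w v ∈ S := by
        rcases eq_or_ne v x with rfl | hvx
        · simpa [Equiv.swap_apply_left] using hw
        rcases eq_or_ne v w with rfl | hvw
        · simpa [Equiv.swap_apply_right] using hxS
        · simpa [Equiv.swap_apply_of_ne_of_ne hvx hvw] using hv
      have := hπ.2 _ hv'
      simpa [Equiv.symm_trans_apply, Equiv.swap_apply_left] using this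
    · intro π hπ
      simp only [hE, Finset.mem_coe, mem_filter] at hπ ⊢
      refine ⟨mem_univ _, fun v hv => ?_⟩
      have hv' : Equiv.swap x w v ∈ S := by
        rcases eq_or_ne v x with rfl | hvx
        · simpa [Equiv.swap_apply_left] using hw
        rcases eq_or_ne v w with rfl | hvw
        · simpa [Equiv.swap_apply_right] using hxS
        · simpa [Equiv.swap_apply_of_ne_of_ne hvx hvw] using hv
      have := hπ.2 _ hv'
      simpa [Equiv.symm_trans_apply, Equiv.swap_apply_right] using this
    · intro π _; ext i; simp [Equiv.swap_apply_self]
    · intro π _; ext i; simp [Equiv.swap_apply_self]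
  have hEx : E x = univ.filter fun π : Fin m ≃ W => ∀ a ∈ A, π.symm x < π.symm a := by
    ext π
    simp only [hE, mem_filter, mem_univ, true_and, hS, mem_insert]
    constructor
    · intro h a ha
      have hax : a ≠ x := fun e => hx (e ▸ ha)
      exact lt_of_le_of_ne (h a (Or.inr ha)) fun e => hax (π.symm.injective e.symm)
    · rintro h v (rfl | hv)
      · exact le_rfl
      · exact (h v hv).le
  have hcard : m.factorial = ∑ w ∈ S, (E w).card := by
    rw [← hfac, ← Finset.card_univ, hcover, Finset.card_biUnion hdisj]
  rw [hcard, Finset.sum_congr rfl hsame, Finset.sum_const, smul_eq_mul, hS,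
    Finset.card_insert_of_notMem hx, ← hEx]

/-- Pointwise formula for the synergy of `s, t` in the closeness game, valid for any
coalition `C` whose members all have distance at most `Δ` from `u`. -/
lemma synergy_nuSingle {V : Type*} [DecidableEq V] (G : SimpleGraph V) (f : ℕ → ℝ) (u s t : V)
    (hd : G.dist s u ≤ G.dist t u) (C : Finset V)
    (Δ : ℕ) (hΔ : ∀ v ∈ C, G.dist v u ≤ Δ) :
    synergy (nuSingle G f u) C s t
      = -f (G.dist t u) * (if ∀ v ∈ C, G.dist t u < G.dist v u then (1:ℝ) else 0)
        + ∑ d ∈ Finset.Icc (G.dist t u + 1) Δ,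
            f d * ((if ∀ v ∈ C, d ≤ G.dist v u then (1:ℝ) else 0)
                   - (if ∀ v ∈ C, d < G.dist v u then (1:ℝ) else 0)) := by
  classical
  rcases C.eq_empty_or_nonempty with rfl | hC
  · have h1 : nuSingle G f u (insert s (insert t ∅)) = f (G.dist s u) := by
      rw [nuSingle, dif_pos (insert_nonempty _ _)]
      have : (insert s (insert t (∅:Finset V))).inf' (insert_nonempty _ _)
          (fun c => G.dist c u) = G.dist s u ⊓ G.dist t u := by
        simp
      rw [this, inf_eq_left.mpr hd]
    have h2 : nuSingle G f u (insert s ∅) = f (G.dist s u) := by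
      rw [nuSingle, dif_pos (insert_nonempty _ _)]
      congr 1
    have h3 : nuSingle G f u (insert t ∅) = f (G.dist t u) := by
      rw [nuSingle, dif_pos (insert_nonempty _ _)]
      congr 1
    have h4 : nuSingle G f u (∅ : Finset V) = 0 := by rw [nuSingle, dif_neg (by simp)]
    rw [synergy, h1, h2, h3, h4]
    simp
  · set e := C.inf' hC fun c => G.dist c u with he
    set D := G.dist t u with hDdef
    have h4 : nuSingle G f u C = f e := by rw [nuSingle, dif_pos hC]
    have h3 : nuSingle G f u (insert t C) = f (D ⊓ e) := by
      rw [nuSingle, dif_pos (insert_nonempty _ _)]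
      congr 1
      rw [Finset.inf'_insert (H := hC)]
    have h2 : nuSingle G f u (insert s C) = f (G.dist s u ⊓ e) := by
      rw [nuSingle, dif_pos (insert_nonempty _ _)]
      congr 1
      rw [Finset.inf'_insert (H := hC)]
    have h1 : nuSingle G f u (insert s (insert t C)) = f (G.dist s u ⊓ e) := by
      rw [nuSingle, dif_pos (insert_nonempty _ _)]
      have h5 : (insert s (insert t C)).inf' (insert_nonempty _ _)
          (fun c => G.dist c u) = G.dist s u ⊓ (D ⊓ e) := by
        rw [Finset.inf'_insert (H := insert_nonempty _ _), Finset.inf'_insert (H := hC)]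
      rw [h5]
      congr 1
      have h6 : G.dist s u ≤ D := hd
      rw [← inf_assoc, inf_eq_left.mpr h6]
    have hlt : ∀ d : ℕ, (∀ v ∈ C, d < G.dist v u) ↔ d < e := by
      intro d; rw [he, Finset.lt_inf'_iff]
    have hle : ∀ d : ℕ, (∀ v ∈ C, d ≤ G.dist v u) ↔ d ≤ e := by
      intro d; rw [he, Finset.le_inf'_iff]
    simp only [synergy, h1, h2, h3, h4, hlt, hle]
    rcases le_or_gt e D with hcase | hcase
    · have hmin : D ⊓ e = e := min_eq_right hcase
      rw [hmin, if_neg (by omega), Finset.sum_eq_zero, mul_zero]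
      · ring
      · intro d hd'
        simp only [mem_Icc] at hd'
        rw [if_neg (by omega), if_neg (by omega)]
        ring
    · have hmin : D ⊓ e = D := min_eq_left hcase.le
      have heΔ : e ≤ Δ := by
        obtain ⟨v, hv, hve⟩ := Finset.exists_mem_eq_inf' hC fun c => G.dist c u
        have hve' : e = G.dist v u := hve
        exact le_trans hve'.le (hΔ v hv)
      rw [hmin, if_pos (by omega),
        Finset.sum_eq_single_of_mem e (by simp only [mem_Icc]; omega)
          (fun d hd' hne => by
            simp only [mem_Icc] at hd'
            rcases lt_or_gt_of_ne hne with h | h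
            · rw [if_pos (by omega), if_pos (by omega)]; ring
            · rw [if_neg (by omega), if_neg (by omega)]; ring)]
      rw [if_pos le_rfl, if_neg (by omega)]
      ring

/-- Closed form underlying Theorem 2. -/
theorem IShapley_nuSingle_closed_form
    {V : Type*} [Fintype V] [DecidableEq V] (G : SimpleGraph V)
    (hG : G.Connected) (hn : 3 ≤ Fintype.card V) (f : ℕ → ℝ)
    (u s t : V) (hus : u ≠ s) (hut : u ≠ t) (hst : s ≠ t)
    (hd : G.dist s u ≤ G.dist t u)
    (D : ℕ) (hD : D = G.dist t u)
    (Mle Mlt : ℕ → ℕ)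
    (hMle : ∀ d, Mle d = ((univ \ {s, t} : Finset V).filter fun v => G.dist v u ≤ d).card + 1)
    (hMlt : ∀ d, Mlt d = ((univ \ {s, t} : Finset V).filter fun v => G.dist v u < d).card + 1)
    (Δ : ℕ) (hΔ : Δ = univ.sup fun v => G.dist v u) :
    IShapley (nuSingle G f u) s t hst
      = -f D / (Mle D : ℝ)
          + ∑ d ∈ Finset.Icc (D + 1) Δ,
              f d * (1 / (Mlt d : ℝ) - 1 / (Mle d : ℝ)) := by
  classical
  have hcardW : Fintype.card {v : V // v ≠ t} = Fintype.card V - 1 := by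
    have := Fintype.card_subtype_compl (fun v : V => v = t)
    simpa [Fintype.card_subtype_eq] using this
  set x : {v : V // v ≠ t} := ⟨s, hst⟩ with hx
  have hΔall : ∀ v : V, G.dist v u ≤ Δ := fun v => hΔ ▸ Finset.le_sup (f := fun w => G.dist w u) (mem_univ v)
  set Cπ : (Fin (Fintype.card V - 1) ≃ {v : V // v ≠ t}) → Finset V :=
    fun π => (univ.filter fun v : {v : V // v ≠ t} => π.symm v < π.symm x).image Subtype.val
    with hCπ
  -- generic condition/cardinality facts for "blocking" sets parametrized by P
  have hcond : ∀ (π : Fin (Fintype.card V - 1) ≃ {v : V // v ≠ t})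
      (P : ℕ → Prop) [DecidablePred P],
      ((∀ v ∈ Cπ π, ¬ P (G.dist v u)) ↔
        ∀ a ∈ univ.filter (fun w : {v : V // v ≠ t} => w.1 ≠ s ∧ P (G.dist w.1 u)),
          π.symm x < π.symm a) := by
    intro π P _
    constructor
    · intro h w hw
      simp only [mem_filter, mem_univ, true_and] at hw
      have hwx : w ≠ x := fun e => hw.1 (by rw [e])
      rcases lt_trichotomy (π.symm x) (π.symm w) with h' | h' | h'
      · exact h'
      · exact absurd (π.symm.injective h'.symm) hwx
      · exact absurd hw.2 (h w.1 (by
          simp only [hCπ, mem_image, mem_filter, mem_univ, true_and]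
          exact ⟨w, h', rfl⟩))
    · intro h v hv
      simp only [hCπ, mem_image, mem_filter, mem_univ, true_and] at hv
      obtain ⟨w, hwlt, rfl⟩ := hv
      intro hP
      have hws : w.1 ≠ s := by
        intro e
        have hwx : w = x := Subtype.ext e
        rw [hwx] at hwlt
        exact lt_irrefl _ hwlt
      have := h w (by simp only [mem_filter, mem_univ, true_and]; exact ⟨hws, hP⟩)
      exact absurd hwlt (not_lt.2 this.le)
  have hcardfilter : ∀ (P : ℕ → Prop) [DecidablePred P],
      (univ.filter fun w : {v : V // v ≠ t} => w.1 ≠ s ∧ P (G.dist w.1 u)).card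
        = ((univ \ {s, t} : Finset V).filter fun v => P (G.dist v u)).card := by
    intro P _
    rw [← Finset.card_image_of_injective _ Subtype.val_injective]
    congr 1
    ext v
    simp only [mem_image, mem_filter, mem_univ, true_and, mem_sdiff, mem_insert, mem_singleton]
    constructor
    · rintro ⟨⟨w, hwt⟩, ⟨hws, hP⟩, rfl⟩
      exact ⟨by push_neg; exact ⟨hws, hwt⟩, hP⟩
    · rintro ⟨hv, hP⟩
      push_neg at hv
      exact ⟨⟨v, hv.2⟩, ⟨hv.1, hP⟩, rfl⟩
  -- counting for the "≤ d" and "< d" blocking sets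
  have hxA : ∀ (P : ℕ → Prop) [DecidablePred P],
      x ∉ univ.filter fun w : {v : V // v ≠ t} => w.1 ≠ s ∧ P (G.dist w.1 u) := by
    intro P _
    simp [hx]
  have hML : ∀ d, (Mle d : ℝ) ≠ 0 := by
    intro d; rw [hMle d]; positivity
  have hMLT : ∀ d, (Mlt d : ℝ) ≠ 0 := by
    intro d; rw [hMlt d]; positivity
  have hF : ((Fintype.card V - 1).factorial : ℝ) ≠ 0 := by positivity
  have hcountle : ∀ d : ℕ,
      (((univ.filter fun π : Fin (Fintype.card V - 1) ≃ {v : V // v ≠ t} =>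
          ∀ a ∈ univ.filter (fun w : {v : V // v ≠ t} => w.1 ≠ s ∧ G.dist w.1 u ≤ d),
            π.symm x < π.symm a).card : ℝ))
        = ((Fintype.card V - 1).factorial : ℝ) / (Mle d : ℝ) := by
    intro d
    rw [eq_div_iff (hML d), mul_comm]
    have hc := count_first hcardW x
      (univ.filter fun w : {v : V // v ≠ t} => w.1 ≠ s ∧ G.dist w.1 u ≤ d)
      (hxA (fun k => k ≤ d))
    rw [hcardfilter (fun k => k ≤ d), ← hMle d] at hc
    exact_mod_cast hc
  have hcountlt : ∀ d : ℕ,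
      (((univ.filter fun π : Fin (Fintype.card V - 1) ≃ {v : V // v ≠ t} =>
          ∀ a ∈ univ.filter (fun w : {v : V // v ≠ t} => w.1 ≠ s ∧ G.dist w.1 u < d),
            π.symm x < π.symm a).card : ℝ))
        = ((Fintype.card V - 1).factorial : ℝ) / (Mlt d : ℝ) := by
    intro d
    rw [eq_div_iff (hMLT d), mul_comm]
    have hc := count_first hcardW x
      (univ.filter fun w : {v : V // v ≠ t} => w.1 ≠ s ∧ G.dist w.1 u < d)
      (hxA (fun k => k < d))
    rw [hcardfilter (fun k => k < d), ← hMlt d] at hc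
    exact_mod_cast hc
  -- rewrite each synergy term
  have hXiff : ∀ (π : Fin (Fintype.card V - 1) ≃ {v : V // v ≠ t}) (d : ℕ),
      (∀ v ∈ Cπ π, d < G.dist v u) ↔
        (∀ a ∈ univ.filter (fun w : {v : V // v ≠ t} => w.1 ≠ s ∧ G.dist w.1 u ≤ d),
          π.symm x < π.symm a) := by
    intro π d
    have := hcond π (fun k => k ≤ d)
    simpa only [not_le] using this
  have hYiff : ∀ (π : Fin (Fintype.card V - 1) ≃ {v : V // v ≠ t}) (d : ℕ),
      (∀ v ∈ Cπ π, d ≤ G.dist v u) ↔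
        (∀ a ∈ univ.filter (fun w : {v : V // v ≠ t} => w.1 ≠ s ∧ G.dist w.1 u < d),
          π.symm x < π.symm a) := by
    intro π d
    have := hcond π (fun k => k < d)
    simpa only [not_lt] using this
  have hstep : ∀ π : Fin (Fintype.card V - 1) ≃ {v : V // v ≠ t},
      synergy (nuSingle G f u) (Cπ π) s t
        = -f D * (if ∀ a ∈ univ.filter (fun w : {v : V // v ≠ t} =>
              w.1 ≠ s ∧ G.dist w.1 u ≤ D), π.symm x < π.symm a then (1:ℝ) else 0)
          + ∑ d ∈ Finset.Icc (D + 1) Δ,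
              f d * ((if ∀ a ∈ univ.filter (fun w : {v : V // v ≠ t} =>
                        w.1 ≠ s ∧ G.dist w.1 u < d), π.symm x < π.symm a then (1:ℝ) else 0)
                     - (if ∀ a ∈ univ.filter (fun w : {v : V // v ≠ t} =>
                        w.1 ≠ s ∧ G.dist w.1 u ≤ d), π.symm x < π.symm a then (1:ℝ) else 0)) := by
    intro π
    rw [synergy_nuSingle G f u s t hd (Cπ π) Δ (fun v _ => hΔall v), ← hD]
    simp only [hXiff π, hYiff π]
  -- now compute the sum
  rw [IShapley]
  have hsum : (∑ π : Fin (Fintype.card V - 1) ≃ {v : V // v ≠ t},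
      synergy (nuSingle G f u)
        ((univ.filter fun v : {v : V // v ≠ t} => π.symm v < π.symm ⟨s, hst⟩).image
          Subtype.val) s t)
      = ∑ π : Fin (Fintype.card V - 1) ≃ {v : V // v ≠ t},
        (-f D * (if ∀ a ∈ univ.filter (fun w : {v : V // v ≠ t} =>
              w.1 ≠ s ∧ G.dist w.1 u ≤ D), π.symm x < π.symm a then (1:ℝ) else 0)
          + ∑ d ∈ Finset.Icc (D + 1) Δ,
              f d * ((if ∀ a ∈ univ.filter (fun w : {v : V // v ≠ t} =>
                        w.1 ≠ s ∧ G.dist w.1 u < d), π.symm x < π.symm a then (1:ℝ) else 0)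
                     - (if ∀ a ∈ univ.filter (fun w : {v : V // v ≠ t} =>
                        w.1 ≠ s ∧ G.dist w.1 u ≤ d), π.symm x < π.symm a then (1:ℝ) else 0))) :=
    Finset.sum_congr rfl fun π _ => hstep π
  rw [hsum, Finset.sum_add_distrib, ← Finset.mul_sum, Finset.sum_comm]
  rw [Finset.sum_boole, hcountle D]
  have hinner : ∀ d ∈ Finset.Icc (D + 1) Δ,
      (∑ π : Fin (Fintype.card V - 1) ≃ {v : V // v ≠ t},
        f d * ((if ∀ a ∈ univ.filter (fun w : {v : V // v ≠ t} =>
                  w.1 ≠ s ∧ G.dist w.1 u < d), π.symm x < π.symm a then (1:ℝ) else 0)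
               - (if ∀ a ∈ univ.filter (fun w : {v : V // v ≠ t} =>
                  w.1 ≠ s ∧ G.dist w.1 u ≤ d), π.symm x < π.symm a then (1:ℝ) else 0)))
      = ((Fintype.card V - 1).factorial : ℝ)
          * (f d * (1 / (Mlt d : ℝ) - 1 / (Mle d : ℝ))) := by
    intro d _
    rw [← Finset.mul_sum, Finset.sum_sub_distrib, Finset.sum_boole, Finset.sum_boole,
      hcountle d, hcountlt d]
    ring
  rw [Finset.sum_congr rfl hinner, ← Finset.mul_sum]
  have hfirst : -f D * (((Fintype.card V - 1).factorial : ℝ) / (Mle D : ℝ))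
      = ((Fintype.card V - 1).factorial : ℝ) * (-f D / (Mle D : ℝ)) := by
    ring
  rw [hfirst, ← mul_add, mul_div_cancel_left₀ _ hF]
end
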